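/- For all d ≥ 1, c ≥ 1 and r ≥ 1: AR^{d+1}_f(r + 65·(d+1) + 2·c + 3) ≥ AR^{d+1}_{id}(r), where f(i) = max{j : 2_d(j^c) ≤ i} (and f(i) = 0 if no such j exists) and id is the identity function. -/

import Mathlib

/-- `i`-th digit of `u` in base `b` -/
def dig (b i u : ℕ) : ℕ := u / b ^ i % b

lemma dig_lt {b : ℕ} (hb : 0 < b) (i u : ℕ) : dig b i u < b := Nat.mod_lt _ hb

lemma dig_mod_pow {b : ℕ} (hb : 0 < b) {i c : ℕ} (hic : i < c) (u : ℕ) :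
    dig b i (u % b ^ c) = dig b i u := by
  have hpowi : 0 < b ^ i := pow_pos hb i
  have hBpos : 0 < b ^ c := pow_pos hb c
  obtain ⟨q, r, hr, hu⟩ : ∃ q r, r < b ^ c ∧ u = b ^ c * q + r :=
    ⟨u / b ^ c, u % b ^ c, Nat.mod_lt _ hBpos, (Nat.div_add_mod u _).symm⟩
  have hmod : u % b ^ c = r := by
    rw [hu, Nat.mul_add_mod]
    exact Nat.mod_eq_of_lt hr
  unfold dig
  rw [hmod, hu]
  have h2 : b ^ c * q + r = r + b ^ i * (b ^ (c - i) * q) := by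
    have : b ^ c = b ^ i * b ^ (c - i) := by rw [← pow_add]; congr 1; omega
    rw [this]; ring
  rw [h2, Nat.add_mul_div_left _ _ hpowi]
  have h3 : b ^ (c - i) * q = b * (b ^ (c - i - 1) * q) := by
    have : b ^ (c - i) = b * b ^ (c - i - 1) := by
      rw [← pow_succ']; congr 1; omega
    rw [this]; ring
  rw [h3, Nat.add_mul_mod_self_left]

lemma le_of_dig_le {b : ℕ} (hb : 0 < b) : ∀ c : ℕ, ∀ u v : ℕ, u < b ^ c → v < b ^ c →
    (∀ i, i < c → dig b i u ≤ dig b i v) → u ≤ v := by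
  intro c
  induction c with
  | zero => intro u v hu _ _; simp only [pow_zero] at hu; omega
  | succ c ih =>
    intro u v hu hv hd
    have hBpos : 0 < b ^ c := pow_pos hb c
    have hdu : u / b ^ c < b := by
      rw [Nat.div_lt_iff_lt_mul hBpos]
      calc u < b ^ (c+1) := hu
      _ = b * b ^ c := by rw [pow_succ]; ring
    have hdv : v / b ^ c < b := by
      rw [Nat.div_lt_iff_lt_mul hBpos]
      calc v < b ^ (c+1) := hv
      _ = b * b ^ c := by rw [pow_succ]; ring
    have htop : u / b ^ c ≤ v / b ^ c := by
      have := hd c (by omega)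
      unfold dig at this
      rwa [Nat.mod_eq_of_lt hdu, Nat.mod_eq_of_lt hdv] at this
    rcases Nat.lt_or_ge (u / b ^ c) (v / b ^ c) with h | h
    · -- strict at the top digit
      have e1 : u = b ^ c * (u / b ^ c) + u % b ^ c := (Nat.div_add_mod u (b ^ c)).symm
      have e2 : u % b ^ c < b ^ c := Nat.mod_lt _ hBpos
      have e3 : v = b ^ c * (v / b ^ c) + v % b ^ c := (Nat.div_add_mod v (b ^ c)).symm
      have h4 : b ^ c * (u / b ^ c) + b ^ c ≤ b ^ c * (v / b ^ c) := by
        have h5 : u / b ^ c + 1 ≤ v / b ^ c := by omega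
        calc b ^ c * (u / b ^ c) + b ^ c = b ^ c * (u / b ^ c + 1) := by ring
        _ ≤ b ^ c * (v / b ^ c) := Nat.mul_le_mul_left _ h5
      calc u = b ^ c * (u / b ^ c) + u % b ^ c := e1
      _ ≤ b ^ c * (u / b ^ c) + b ^ c := by omega
      _ ≤ b ^ c * (v / b ^ c) := h4
      _ ≤ b ^ c * (v / b ^ c) + v % b ^ c := Nat.le_add_right _ _
      _ = v := e3.symm
    · have heqtop : u / b ^ c = v / b ^ c := le_antisymm htop h
      have hrec : u % b ^ c ≤ v % b ^ c := by
        apply ih (u % b ^ c) (v % b ^ c) (Nat.mod_lt _ hBpos) (Nat.mod_lt _ hBpos)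
        intro i hi
        rw [dig_mod_pow hb (by omega), dig_mod_pow hb (by omega)]
        exact hd i (by omega)
      have e1 : u = b ^ c * (u / b ^ c) + u % b ^ c := (Nat.div_add_mod u (b ^ c)).symm
      have e2 : v = b ^ c * (v / b ^ c) + v % b ^ c := (Nat.div_add_mod v (b ^ c)).symm
      rw [heqtop] at e1
      calc u = b ^ c * (v / b ^ c) + u % b ^ c := e1
      _ ≤ b ^ c * (v / b ^ c) + v % b ^ c := by omega
      _ = v := e2.symm

/-- Tower function: `tower 0 i = i`, `tower (n+1) i = 2 ^ tower n i`. -/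
def tower : ℕ → ℕ → ℕ
  | 0, i => i
  | n+1, i => 2 ^ tower n i

lemma tower_mono (d : ℕ) : Monotone (tower d) := by
  induction d with
  | zero => exact fun a b h => h
  | succ n ih => exact fun a b h => Nat.pow_le_pow_right (by norm_num) (ih h)

lemma le_tower (d i : ℕ) : i ≤ tower d i := by
  induction d with
  | zero => simp [tower]
  | succ n ih => calc i ≤ tower n i := ih
                 _ ≤ 2 ^ tower n i := le_of_lt Nat.lt_two_pow_self
                 _ = tower (n+1) i := rfl

lemma tower_pos {d : ℕ} (hd : 1 ≤ d) (i : ℕ) : 0 < tower d i := by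
  match d, hd with
  | (n+1), _ => exact pow_pos (by norm_num) _

section fProps
variable (d c : ℕ)

noncomputable def flim : ℕ → ℕ := fun i => sSup {j | tower d (j ^ c) ≤ i}

lemma mem_fset_le {i j : ℕ} (hc : 1 ≤ c) (h : tower d (j ^ c) ≤ i) : j ≤ i := by
  calc j ≤ j ^ c := Nat.le_self_pow (by omega) j
  _ ≤ tower d (j ^ c) := le_tower d _
  _ ≤ i := h

lemma fset_bddAbove (i : ℕ) (hc : 1 ≤ c) : BddAbove {j | tower d (j ^ c) ≤ i} :=
  ⟨i, fun _ hj => mem_fset_le d c hc hj⟩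

lemma flim_le_self (hc : 1 ≤ c) (i : ℕ) : flim d c i ≤ i := by
  unfold flim
  by_cases hne : {j | tower d (j ^ c) ≤ i}.Nonempty
  · exact csSup_le hne (fun j hj => mem_fset_le d c hc hj)
  · rw [Set.not_nonempty_iff_eq_empty.1 hne]
    simp [csSup_empty]

lemma flim_mono (hc : 1 ≤ c) : Monotone (flim d c) := by
  intro a b hab
  unfold flim
  by_cases hne : {j | tower d (j ^ c) ≤ a}.Nonempty
  · apply csSup_le_csSup (fset_bddAbove d c b hc) hne
    intro j hj
    exact le_trans hj hab
  · rw [Set.not_nonempty_iff_eq_empty.1 hne]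
    simp [csSup_empty]

lemma flim_zero (hd : 1 ≤ d) : flim d c 0 = 0 := by
  unfold flim
  have h : {j | tower d (j ^ c) ≤ 0} = ∅ := by
    ext j
    simp only [Set.mem_setOf_eq, Set.mem_empty_iff_false, iff_false, not_le]
    exact tower_pos hd _
  rw [h]
  simp [csSup_empty]

/-- the key property : `i < tower d ((flim i + 1)^c)` -/
lemma lt_tower_flim_succ (hc : 1 ≤ c) (i : ℕ) : i < tower d ((flim d c i + 1) ^ c) := by
  by_contra hcon
  push_neg at hcon
  have hmem : (flim d c i + 1) ∈ {j | tower d (j ^ c) ≤ i} := hcon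
  have := le_csSup (fset_bddAbove d c i hc) hmem
  unfold flim at this
  omega

end fProps


/-- most significant differing bit position of two naturals (junk value 0 if equal) -/
def msd (a b : ℕ) : ℕ := (a ^^^ b).size - 1

lemma testBit_size_sub_one {x : ℕ} (h : x ≠ 0) : x.testBit (x.size - 1) = true := by
  have hpos : 0 < x.size := Nat.size_pos.2 (Nat.pos_of_ne_zero h)
  have h1 : 2 ^ (x.size - 1) ≤ x := (Nat.lt_size (m := x.size - 1) (n := x)).1 (by omega)
  have h2 : x < 2 ^ (x.size - 1 + 1) := by
    have : x < 2 ^ x.size := Nat.lt_size_self x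
    have e : x.size - 1 + 1 = x.size := by omega
    rwa [e]
  have hdiv : x / 2 ^ (x.size - 1) = 1 := by
    have hlo : 1 ≤ x / 2 ^ (x.size - 1) :=
      (Nat.le_div_iff_mul_le (pow_pos (by norm_num) _)).2 (by simpa using h1)
    have hhi : x / 2 ^ (x.size - 1) < 2 := by
      rw [Nat.div_lt_iff_lt_mul (pow_pos (by norm_num) _)]
      calc x < 2 ^ (x.size - 1 + 1) := h2
      _ = 2 * 2 ^ (x.size - 1) := by rw [pow_succ]; ring
    omega
  rw [Nat.testBit, Nat.shiftRight_eq_div_pow, hdiv]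
  rfl

lemma msd_testBit_ne {a b : ℕ} (h : a ≠ b) :
    a.testBit (msd a b) ≠ b.testBit (msd a b) := by
  have hx : a ^^^ b ≠ 0 := by
    intro hc; exact h (xor_eq_zero_iff.1 hc)
  have h2 := testBit_size_sub_one hx
  rw [Nat.testBit_xor] at h2
  unfold msd
  intro hc
  rw [hc] at h2
  simp at h2

lemma msd_testBit_high {a b t : ℕ} (ht : msd a b < t) :
    a.testBit t = b.testBit t := by
  by_cases h : a = b
  · rw [h]
  · have hx : a ^^^ b ≠ 0 := fun hc => h (xor_eq_zero_iff.1 hc)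
    have hsize : (a ^^^ b).size ≤ t := by
      have : 0 < (a ^^^ b).size := Nat.size_pos.2 (Nat.pos_of_ne_zero hx)
      unfold msd at ht; omega
    have hlt : (a ^^^ b) < 2 ^ t := Nat.size_le.1 hsize
    have h3 : (a ^^^ b).testBit t = false := Nat.testBit_lt_two_pow hlt
    rw [Nat.testBit_xor] at h3
    cases ha : a.testBit t <;> cases hb : b.testBit t <;> simp_all

/-- ordering: if `a < b` then at the msd, `a` has bit `false` and `b` has bit `true` -/
lemma msd_testBit_of_lt {a b : ℕ} (h : a < b) :
    a.testBit (msd a b) = false ∧ b.testBit (msd a b) = true := by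
  have hne : a ≠ b := Nat.ne_of_lt h
  have hd := msd_testBit_ne hne
  cases hb : b.testBit (msd a b)
  · -- then a.testBit = true, so b < a : contradiction
    have ha : a.testBit (msd a b) = true := by
      cases ha : a.testBit (msd a b)
      · exact absurd (ha.trans hb.symm) hd
      · rfl
    have : b < a := Nat.lt_of_testBit (msd a b) hb ha
      (fun j hj => (msd_testBit_high hj).symm)
    omega
  · have ha : a.testBit (msd a b) = false := by
      cases ha : a.testBit (msd a b)
      · rfl
      · exact absurd (ha.trans hb.symm) hd
    exact ⟨ha, rfl⟩

lemma msd_lt_of_lt_two_pow {a b t : ℕ} (ha : a < 2 ^ t) (hb : b < 2 ^ t) :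
    msd a b < t ∨ (a = b) := by
  by_cases h : a = b
  · exact Or.inr h
  · left
    have hx : a ^^^ b < 2 ^ t := Nat.xor_lt_two_pow ha hb
    have hs : (a ^^^ b).size ≤ t := Nat.size_le.2 hx
    have hx0 : a ^^^ b ≠ 0 := fun hc => h (xor_eq_zero_iff.1 hc)
    have : 0 < (a ^^^ b).size := Nat.size_pos.2 (Nat.pos_of_ne_zero hx0)
    unfold msd; omega

lemma msd_comm (a b : ℕ) : msd a b = msd b a := by unfold msd; rw [Nat.xor_comm]

/-- the derived chain of most-significant-difference positions -/
def der (u : ℕ → ℕ) : ℕ → ℕ := fun i => msd (u i) (u (i+1))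

def derIter (s : ℕ) (u : ℕ → ℕ) : ℕ → ℕ := der^[s] u

lemma derIter_zero (u : ℕ → ℕ) : derIter 0 u = u := rfl

lemma derIter_succ (s : ℕ) (u : ℕ → ℕ) : derIter (s+1) u = derIter s (der u) :=
  Function.iterate_succ_apply der s u

lemma derIter_succ' (s : ℕ) (u : ℕ → ℕ) : derIter (s+1) u = der (derIter s u) :=
  Function.iterate_succ_apply' der s u

lemma derIter_congr {s : ℕ} {u v : ℕ → ℕ} {j : ℕ}
    (h : ∀ i, j ≤ i → i ≤ j + s → u i = v i) : derIter s u j = derIter s v j := by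
  induction s generalizing u v j with
  | zero => exact h j le_rfl (by omega)
  | succ n ih =>
    rw [derIter_succ, derIter_succ]
    refine ih (fun i hji hij => ?_)
    unfold der
    rw [h i (by omega) (by omega), h (i+1) (by omega) (by omega)]

lemma der_shift (u : ℕ → ℕ) : der (fun i => u (i+1)) = fun i => der u (i+1) := rfl

lemma derIter_shift (s : ℕ) (u : ℕ → ℕ) (j : ℕ) :
    derIter s (fun i => u (i+1)) j = derIter s u (j+1) := by
  induction s generalizing u with
  | zero => rfl
  | succ n ih =>
    rw [derIter_succ, derIter_succ, der_shift]
    exact ih (der u)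

/-- The central contradiction: at no level can the first two entries of the derived
chain be equal, given aligned comparison flags at all lower levels. -/
lemma claim_contradiction : ∀ s : ℕ, 1 ≤ s → ∀ X : ℕ → ℕ,
    (∀ i, i ≤ s → X i < X (i+1)) →
    (derIter s X 0 = derIter s X 1) →
    (∀ t, 1 ≤ t → t < s → ((derIter t X 0 = derIter t X 1) ↔ (derIter t X 1 = derIter t X 2))) →
    (∀ t, 1 ≤ t → t < s → ((derIter t X 0 < derIter t X 1) ↔ (derIter t X 1 < derIter t X 2))) →
    False := by
  intro s
  induction s using Nat.strong_induction_on with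
  | _ s IH =>
    intro hs X hmono heq hfeq hflt
    match s, hs with
    | 1, _ =>
      -- base case : msd (X 0) (X 1) = msd (X 1) (X 2) contradicts monotonicity
      have h01 : X 0 < X 1 := hmono 0 (by omega)
      have h12 : X 1 < X 2 := hmono 1 (by omega)
      have e : msd (X 0) (X 1) = msd (X 1) (X 2) := by
        have := heq
        rw [derIter_succ'] at this
        exact this
      have b1 : (X 1).testBit (msd (X 0) (X 1)) = true := (msd_testBit_of_lt h01).2
      have b2 : (X 1).testBit (msd (X 1) (X 2)) = false := (msd_testBit_of_lt h12).1
      rw [e] at b1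
      rw [b1] at b2
      exact Bool.noConfusion b2
    | (t+2), _ =>
      set s' := t + 1 with hs'
      set u : ℕ → ℕ := derIter s' X with hu
      have hl : ∀ j, derIter (t+2) X j = msd (u j) (u (j+1)) := by
        intro j
        rw [show t + 2 = s' + 1 by omega, derIter_succ']
        rfl
      have hfe := hfeq s' (by omega) (by omega)
      have hfl := hflt s' (by omega) (by omega)
      by_cases hcase : u 0 = u 1
      · -- recurse one level down
        exact IH s' (by omega) (by omega) X (fun i hi => hmono i (by omega)) hcase
          (fun t' h1 h2 => hfeq t' h1 (by omega)) (fun t' h1 h2 => hflt t' h1 (by omega))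
      · have hne12 : u 1 ≠ u 2 := fun hc => hcase (hfe.2 hc)
        have heq' : msd (u 0) (u 1) = msd (u 1) (u 2) := by
          rw [← hl 0, ← hl 1]; exact heq
        by_cases hlt : u 0 < u 1
        · have hlt2 : u 1 < u 2 := hfl.1 hlt
          have b1 : (u 1).testBit (msd (u 0) (u 1)) = true := (msd_testBit_of_lt hlt).2
          have b2 : (u 1).testBit (msd (u 1) (u 2)) = false := (msd_testBit_of_lt hlt2).1
          rw [heq'] at b1; rw [b1] at b2; exact Bool.noConfusion b2
        · have hgt : u 1 < u 0 := by
            rcases Nat.lt_trichotomy (u 0) (u 1) with h | h | h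
            · exact absurd h hlt
            · exact absurd h hcase
            · exact h
          have hgt2 : u 2 < u 1 := by
            rcases Nat.lt_trichotomy (u 1) (u 2) with h | h | h
            · exact absurd h (fun hc => hlt (hfl.2 hc))
            · exact absurd h hne12
            · exact h
          have b1 : (u 1).testBit (msd (u 1) (u 0)) = false := (msd_testBit_of_lt hgt).1
          have b2 : (u 1).testBit (msd (u 2) (u 1)) = true := (msd_testBit_of_lt hgt2).2
          rw [msd_comm (u 1) (u 0)] at b1
          rw [msd_comm (u 2) (u 1)] at b2
          rw [heq'] at b1
          rw [b1] at b2
          exact Bool.noConfusion b2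

----------------------------------------------------------------
-- Phase 5 helpers
----------------------------------------------------------------

/-- clamped extension of a window to an ℕ-indexed sequence -/
def extW {d : ℕ} (z : Fin (d+1) → ℕ) : ℕ → ℕ := fun i => z ⟨min i d, by omega⟩

lemma extW_eq {d : ℕ} (z : Fin (d+1) → ℕ) {i : ℕ} (h : i ≤ d) :
    extW z i = z ⟨i, by omega⟩ := by
  unfold extW
  congr 1
  exact Fin.ext (by simp; omega)

lemma sup_eq_last {n : ℕ} (w : Fin (n+1) → ℕ) (hw : Monotone w) :
    Finset.univ.sup w = w (Fin.last n) := by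
  apply le_antisymm
  · exact Finset.sup_le (fun i _ => hw (Fin.le_last i))
  · exact Finset.le_sup (Finset.mem_univ _)

lemma le_sup_window {n : ℕ} (w : Fin (n+1) → ℕ) (i : Fin (n+1)) :
    w i ≤ Finset.univ.sup w := Finset.le_sup (Finset.mem_univ _)

lemma tower_ge_one {d m : ℕ} (hm : 1 ≤ m) : 1 ≤ tower d m :=
  le_trans hm (le_tower d m)

/-- bound on entries of iterated derived chains of a window extension -/
lemma derIter_ext_bound (d c : ℕ) (hc : 1 ≤ c) (z : Fin (d+1) → ℕ) :
    ∀ s j : ℕ, s + j ≤ d →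
      derIter s (extW z) j < tower (d - s) ((flim d c (Finset.univ.sup z) + 1) ^ c) := by
  set m := (flim d c (Finset.univ.sup z) + 1) ^ c with hm
  have hm1 : 1 ≤ m := Nat.one_le_iff_ne_zero.2 (pow_ne_zero _ (by omega))
  intro s
  induction s with
  | zero =>
    intro j hj
    rw [derIter_zero]
    calc extW z j ≤ Finset.univ.sup z := le_sup_window z _
    _ < tower d m := lt_tower_flim_succ d c hc _
  | succ s ih =>
    intro j hj
    have h1 : derIter s (extW z) j < tower (d - s) m := ih j (by omega)
    have h2 : derIter s (extW z) (j+1) < tower (d - s) m := ih (j+1) (by omega)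
    have hds : d - s = (d - (s+1)) + 1 := by omega
    rw [hds] at h1 h2
    have htow : tower ((d - (s+1)) + 1) m = 2 ^ tower (d - (s+1)) m := rfl
    rw [htow] at h1 h2
    rw [derIter_succ']
    show msd (derIter s (extW z) j) (derIter s (extW z) (j+1)) < tower (d - (s+1)) m
    rcases msd_lt_of_lt_two_pow h1 h2 with h | h
    · exact h
    · have : msd (derIter s (extW z) j) (derIter s (extW z) (j+1)) = 0 := by
        unfold msd
        rw [h]
        simp
      rw [this]
      exact lt_of_lt_of_le (by omega) (tower_ge_one hm1)

/-- a boolean pair of constraints forces logical equivalence -/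
lemma bool_pair_iff {P Q : Prop} [Decidable P] [Decidable Q]
    (h1 : (if P then 1 else 0 : ℕ) ≤ (if Q then 1 else 0))
    (h2 : (if P then 0 else 1 : ℕ) ≤ (if Q then 0 else 1)) : P ↔ Q := by
  by_cases hP : P <;> by_cases hQ : Q <;> simp_all

/-- `ARProp f d r R` : every `f`-limited colouring `C : {0,…,R}^d → ℕ^r` admits
`x₁ < … < x_{d+1} ≤ R` with `C(x₁,…,x_d) ≤ C(x₂,…,x_{d+1})` coordinatewise. -/
def ARProp (f : ℕ → ℕ) (d r R : ℕ) : Prop :=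
  ∀ C : (Fin d → ℕ) → (Fin r → ℕ),
    (∀ x : Fin d → ℕ, (∀ i, x i ≤ R) → ∀ j, C x j ≤ f (Finset.univ.sup x) + 1) →
    ∃ x : Fin (d+1) → ℕ, StrictMono x ∧ x (Fin.last d) ≤ R ∧
      ∀ j, C (fun i => x i.castSucc) j ≤ C (fun i => x i.succ) j

/-- `ARnum f d r` : the least `R` witnessing the adjacent Ramsey theorem `AR_f^d(r)`. -/
noncomputable def ARnum (f : ℕ → ℕ) (d r : ℕ) : ℕ := sInf {R | ARProp f d r R}

----------------------------------------------------------------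
-- the transformed colouring
----------------------------------------------------------------
section Key

variable (d c r : ℕ) (C : (Fin (d+1) → ℕ) → Fin r → ℕ)

noncomputable def compsList : List ((Fin (d+1) → ℕ) → ℕ) :=
  (List.ofFn (fun j : Fin r => fun z : Fin (d+1) → ℕ => C (fun i => flim d c (z i)) j))
  ++ (List.ofFn (fun i : Fin d => fun z : Fin (d+1) → ℕ =>
        if flim d c (extW z i) = flim d c (extW z (i+1)) then (1:ℕ) else 0))
  ++ (List.ofFn (fun i : Fin d => fun z : Fin (d+1) → ℕ =>
        if flim d c (extW z i) = flim d c (extW z (i+1)) then (0:ℕ) else 1))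
  ++ (List.ofFn (fun l : Fin d => fun z : Fin (d+1) → ℕ =>
        if derIter (l+1) (extW z) 0 < derIter (l+1) (extW z) 1 then (1:ℕ) else 0))
  ++ (List.ofFn (fun l : Fin d => fun z : Fin (d+1) → ℕ =>
        if derIter (l+1) (extW z) 0 < derIter (l+1) (extW z) 1 then (0:ℕ) else 1))
  ++ (List.ofFn (fun l : Fin d => fun z : Fin (d+1) → ℕ =>
        if derIter (l+1) (extW z) 0 = derIter (l+1) (extW z) 1 then (1:ℕ) else 0))
  ++ (List.ofFn (fun l : Fin d => fun z : Fin (d+1) → ℕ =>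
        if derIter (l+1) (extW z) 0 = derIter (l+1) (extW z) 1 then (0:ℕ) else 1))
  ++ (List.ofFn (fun i : Fin c => fun z : Fin (d+1) → ℕ =>
        dig (flim d c (Finset.univ.sup z) + 2) i (derIter d (extW z) 0)))
  ++ (List.ofFn (fun i : Fin c => fun z : Fin (d+1) → ℕ =>
        dig (flim d c (Finset.univ.sup z) + 2) i
          ((flim d c (Finset.univ.sup z) + 1) ^ c - 1 - derIter d (extW z) 0)))

lemma compsList_length : (compsList d c r C).length = r + 6*d + 2*c := by
  simp [compsList]
  ring

noncomputable def Dcol : (Fin (d+1) → ℕ) → Fin (r + 65*(d+1) + 2*c + 3) → ℕ :=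
  fun z j => ((compsList d c r C).getD j.val (fun _ => 0)) z

end Key


section Key2
variable (d c r : ℕ) (C : (Fin (d+1) → ℕ) → Fin r → ℕ)

lemma sup_flim_comp (hd : 1 ≤ d) (hc : 1 ≤ c) (z : Fin (d+1) → ℕ) :
    Finset.univ.sup (fun i => flim d c (z i)) = flim d c (Finset.univ.sup z) := by
  have h := Finset.comp_sup_eq_sup_comp (s := (Finset.univ : Finset (Fin (d+1)))) (f := z)
    (flim d c) (fun x y => (flim_mono d c hc).map_max) (flim_zero d c hd)
  exact h.symm

lemma compsList_bound {R : ℕ} (hd : 1 ≤ d) (hc : 1 ≤ c)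
    (hC : ∀ x : Fin (d+1) → ℕ, (∀ i, x i ≤ R) → ∀ j, C x j ≤ (Finset.univ.sup x) + 1) :
    ∀ g ∈ compsList d c r C, ∀ z : Fin (d+1) → ℕ, (∀ i, z i ≤ R) →
      g z ≤ flim d c (Finset.univ.sup z) + 1 := by
  intro g hg z hz
  simp only [compsList, List.mem_append, List.mem_ofFn] at hg
  rcases hg with (((((((⟨j, rfl⟩ | ⟨i, rfl⟩) | ⟨i, rfl⟩) | ⟨l, rfl⟩) | ⟨l, rfl⟩) | ⟨l, rfl⟩) | ⟨l, rfl⟩) | ⟨i, rfl⟩) | ⟨i, rfl⟩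
  · -- C-component
    have h1 := hC (fun i => flim d c (z i)) (fun i => le_trans (flim_le_self d c hc _) (hz i)) j
    calc C (fun i => flim d c (z i)) j ≤ (Finset.univ.sup fun i => flim d c (z i)) + 1 := h1
    _ = flim d c (Finset.univ.sup z) + 1 := by rw [sup_flim_comp d c hd hc z]
  · dsimp only; split <;> omega
  · dsimp only; split <;> omega
  · dsimp only; split <;> omega
  · dsimp only; split <;> omega
  · dsimp only; split <;> omega
  · dsimp only; split <;> omega
  · dsimp only
    have := dig_lt (b := flim d c (Finset.univ.sup z) + 2) (by omega) (i : ℕ)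
      (derIter d (extW z) 0)
    omega
  · dsimp only
    have := dig_lt (b := flim d c (Finset.univ.sup z) + 2) (by omega) (i : ℕ)
      ((flim d c (Finset.univ.sup z) + 1) ^ c - 1 - derIter d (extW z) 0)
    omega

end Key2

lemma key_transfer (d c r R : ℕ) (hd : 1 ≤ d) (hc : 1 ≤ c)
    (H : ARProp (flim d c) (d+1) (r + 65*(d+1) + 2*c + 3) R) :
    ARProp id (d+1) r R := by
  intro C hC
  have hC' : ∀ x : Fin (d+1) → ℕ, (∀ i, x i ≤ R) → ∀ j, C x j ≤ (Finset.univ.sup x) + 1 := hC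
  have hDlim : ∀ z : Fin (d+1) → ℕ, (∀ i, z i ≤ R) → ∀ j,
      Dcol d c r C z j ≤ flim d c (Finset.univ.sup z) + 1 := by
    intro z hz j
    unfold Dcol
    by_cases hj : (j : ℕ) < (compsList d c r C).length
    · rw [List.getD_eq_get (i := ⟨_, hj⟩)]
      exact compsList_bound d c r C hd hc hC' _ (List.get_mem _ _) z hz
    · rw [List.getD_eq_default _ _ (by omega)]
      omega
  obtain ⟨x, hxmono, hxlast, hxgood⟩ := H (Dcol d c r C) hDlim
  have hlen : (compsList d c r C).length ≤ r + 65*(d+1) + 2*c + 3 := by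
    rw [compsList_length]; omega
  have hcomp : ∀ g ∈ compsList d c r C,
      g (fun i => x i.castSucc) ≤ g (fun i => x i.succ) := by
    intro g hg
    obtain ⟨n, hget⟩ := List.get_of_mem hg
    have hn : (n : ℕ) < r + 65*(d+1) + 2*c + 3 := lt_of_lt_of_le n.isLt hlen
    have h2 := hxgood ⟨(n : ℕ), hn⟩
    unfold Dcol at h2
    rw [List.getD_eq_get (i := ⟨_, (show ((⟨(n : ℕ), hn⟩ : Fin _) : ℕ) < _ from n.isLt)⟩)] at h2
    have hfin : (⟨((⟨(n : ℕ), hn⟩ : Fin _) : ℕ), n.isLt⟩ : Fin (compsList d c r C).length) = n :=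
      Fin.ext rfl
    rw [hfin, hget] at h2
    exact h2
  -- the chain as an ℕ-indexed sequence
  set X : ℕ → ℕ := fun i => x ⟨min i (d+1), by omega⟩ with hX
  have hXval : ∀ i : ℕ, (hi : i ≤ d + 1) → X i = x ⟨i, by omega⟩ := by
    intro i hi
    exact congrArg x (Fin.ext (by show min i (d+1) = i; omega))
  have hXmono : ∀ i, i ≤ d → X i < X (i+1) := by
    intro i hi
    rw [hXval i (by omega), hXval (i+1) (by omega)]
    exact hxmono (Fin.mk_lt_mk.2 (by omega))
  have hE1 : ∀ i, i ≤ d → extW (fun i => x i.castSucc) i = X i := by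
    intro i hi
    rw [extW_eq _ hi, hXval i (by omega)]
    exact congrArg x (Fin.ext (by simp))
  have hE2 : ∀ i, i ≤ d → extW (fun i => x i.succ) i = X (i+1) := by
    intro i hi
    rw [extW_eq _ hi, hXval (i+1) (by omega)]
    exact congrArg x (Fin.ext (by simp))
  have hT1 : ∀ s j : ℕ, j + s ≤ d → derIter s (extW (fun i => x i.castSucc)) j = derIter s X j := by
    intro s j h
    exact derIter_congr (fun i h1 h2 => hE1 i (by omega))
  have hT2 : ∀ s j : ℕ, j + s ≤ d → derIter s (extW (fun i => x i.succ)) j = derIter s X (j+1) := by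
    intro s j h
    have h1 : derIter s (extW (fun i => x i.succ)) j = derIter s (fun i => X (i+1)) j :=
      derIter_congr (fun i hi1 hi2 => hE2 i (by omega))
    rw [h1, derIter_shift]
  have hmono1 : Monotone (fun i : Fin (d+1) => x i.castSucc) := by
    intro a b hab
    exact hxmono.monotone (by simpa using hab)
  have hmono2 : Monotone (fun i : Fin (d+1) => x i.succ) := by
    intro a b hab
    exact hxmono.monotone (by simpa using hab)
  have hsupi : Finset.univ.sup (fun i : Fin (d+1) => x i.castSucc) = X d := by
    rw [sup_eq_last _ hmono1, hXval d (by omega)]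
    exact congrArg x (Fin.ext (by simp))
  have hsupt : Finset.univ.sup (fun i : Fin (d+1) => x i.succ) = X (d+1) := by
    rw [sup_eq_last _ hmono2, hXval (d+1) (by omega)]
    exact congrArg x (Fin.ext (by simp))
  -- epsilon equivalences
  have epsiff : ∀ i : ℕ, i < d →
      ((flim d c (X i) = flim d c (X (i+1))) ↔ (flim d c (X (i+1)) = flim d c (X (i+2)))) := by
    intro i hi
    have m1 : (fun z : Fin (d+1) → ℕ =>
        if flim d c (extW z i) = flim d c (extW z (i+1)) then (1:ℕ) else 0) ∈ compsList d c r C := by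
      simp only [compsList, List.mem_append, List.mem_ofFn]
      exact Or.inl (Or.inl (Or.inl (Or.inl (Or.inl (Or.inl (Or.inl (Or.inr ⟨⟨i, hi⟩, rfl⟩)))))))
    have m2 : (fun z : Fin (d+1) → ℕ =>
        if flim d c (extW z i) = flim d c (extW z (i+1)) then (0:ℕ) else 1) ∈ compsList d c r C := by
      simp only [compsList, List.mem_append, List.mem_ofFn]
      exact Or.inl (Or.inl (Or.inl (Or.inl (Or.inl (Or.inl (Or.inr ⟨⟨i, hi⟩, rfl⟩))))))
    have c1 := hcomp _ m1
    have c2 := hcomp _ m2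
    rw [hE1 i (by omega), hE1 (i+1) (by omega), hE2 i (by omega), hE2 (i+1) (by omega)] at c1 c2
    exact bool_pair_iff c1 c2
  -- sigma/tau equivalences at levels 1..d
  have sigiff : ∀ t : ℕ, 1 ≤ t → t < d →
      ((derIter t X 0 < derIter t X 1) ↔ (derIter t X 1 < derIter t X 2)) := by
    intro t ht1 ht2
    obtain ⟨t', rfl⟩ : ∃ t', t = t' + 1 := ⟨t - 1, by omega⟩
    have m1 : (fun z : Fin (d+1) → ℕ =>
        if derIter (t'+1) (extW z) 0 < derIter (t'+1) (extW z) 1 then (1:ℕ) else 0) ∈ compsList d c r C := by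
      simp only [compsList, List.mem_append, List.mem_ofFn]
      exact Or.inl (Or.inl (Or.inl (Or.inl (Or.inl (Or.inr ⟨⟨t', by omega⟩, rfl⟩)))))
    have m2 : (fun z : Fin (d+1) → ℕ =>
        if derIter (t'+1) (extW z) 0 < derIter (t'+1) (extW z) 1 then (0:ℕ) else 1) ∈ compsList d c r C := by
      simp only [compsList, List.mem_append, List.mem_ofFn]
      exact Or.inl (Or.inl (Or.inl (Or.inl (Or.inr ⟨⟨t', by omega⟩, rfl⟩))))
    have c1 := hcomp _ m1
    have c2 := hcomp _ m2
    rw [hT1 (t'+1) 0 (by omega), hT1 (t'+1) 1 (by omega),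
        hT2 (t'+1) 0 (by omega), hT2 (t'+1) 1 (by omega)] at c1 c2
    exact bool_pair_iff c1 c2
  have tauiff : ∀ t : ℕ, 1 ≤ t → t < d →
      ((derIter t X 0 = derIter t X 1) ↔ (derIter t X 1 = derIter t X 2)) := by
    intro t ht1 ht2
    obtain ⟨t', rfl⟩ : ∃ t', t = t' + 1 := ⟨t - 1, by omega⟩
    have m1 : (fun z : Fin (d+1) → ℕ =>
        if derIter (t'+1) (extW z) 0 = derIter (t'+1) (extW z) 1 then (1:ℕ) else 0) ∈ compsList d c r C := by
      simp only [compsList, List.mem_append, List.mem_ofFn]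
      exact Or.inl (Or.inl (Or.inl (Or.inr ⟨⟨t', by omega⟩, rfl⟩)))
    have m2 : (fun z : Fin (d+1) → ℕ =>
        if derIter (t'+1) (extW z) 0 = derIter (t'+1) (extW z) 1 then (0:ℕ) else 1) ∈ compsList d c r C := by
      simp only [compsList, List.mem_append, List.mem_ofFn]
      exact Or.inl (Or.inl (Or.inr ⟨⟨t', by omega⟩, rfl⟩))
    have c1 := hcomp _ m1
    have c2 := hcomp _ m2
    rw [hT1 (t'+1) 0 (by omega), hT1 (t'+1) 1 (by omega),
        hT2 (t'+1) 0 (by omega), hT2 (t'+1) 1 (by omega)] at c1 c2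
    exact bool_pair_iff c1 c2
  -- case analysis on whether the first block is flat
  by_cases he0 : flim d c (X 0) = flim d c (X 1)
  · -- all blocks equal : derive a contradiction
    exfalso
    have hall : ∀ i : ℕ, i ≤ d → flim d c (X i) = flim d c (X (i+1)) := by
      intro i
      induction i with
      | zero => intro _; exact he0
      | succ n ih =>
        intro hn
        exact (epsiff n (by omega)).1 (ih (by omega))
    have hflat : flim d c (X (d+1)) = flim d c (X d) := (hall d (le_refl d)).symm
    -- digit constraints
    have hdigA : ∀ i : ℕ, i < c →
        dig (flim d c (X d) + 2) i (derIter d X 0) ≤ dig (flim d c (X d) + 2) i (derIter d X 1) := by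
      intro i hi
      have m1 : (fun z : Fin (d+1) → ℕ =>
          dig (flim d c (Finset.univ.sup z) + 2) i (derIter d (extW z) 0)) ∈ compsList d c r C := by
        simp only [compsList, List.mem_append, List.mem_ofFn]
        exact Or.inl (Or.inr ⟨⟨i, hi⟩, rfl⟩)
      have c1 := hcomp _ m1
      rw [hsupi, hsupt, hT1 d 0 (by omega), hT2 d 0 (by omega), hflat] at c1
      exact c1
    have hdigB : ∀ i : ℕ, i < c →
        dig (flim d c (X d) + 2) i ((flim d c (X d) + 1) ^ c - 1 - derIter d X 0)
          ≤ dig (flim d c (X d) + 2) i ((flim d c (X d) + 1) ^ c - 1 - derIter d X 1) := by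
      intro i hi
      have m1 : (fun z : Fin (d+1) → ℕ =>
          dig (flim d c (Finset.univ.sup z) + 2) i
            ((flim d c (Finset.univ.sup z) + 1) ^ c - 1 - derIter d (extW z) 0)) ∈ compsList d c r C := by
        simp only [compsList, List.mem_append, List.mem_ofFn]
        exact Or.inr ⟨⟨i, hi⟩, rfl⟩
      have c1 := hcomp _ m1
      rw [hsupi, hsupt, hT1 d 0 (by omega), hT2 d 0 (by omega), hflat] at c1
      exact c1
    -- bounds on the bottom values
    set m : ℕ := (flim d c (X d) + 1) ^ c with hm
    have hmpos : 1 ≤ m := Nat.one_le_iff_ne_zero.2 (pow_ne_zero _ (by omega))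
    have hA0 : derIter d X 0 < m := by
      have := derIter_ext_bound d c hc (fun i : Fin (d+1) => x i.castSucc) d 0 (by omega)
      rw [hT1 d 0 (by omega), hsupi, Nat.sub_self] at this
      exact this
    have hA1 : derIter d X 1 < m := by
      have := derIter_ext_bound d c hc (fun i : Fin (d+1) => x i.succ) d 0 (by omega)
      rw [hT2 d 0 (by omega), hsupt, Nat.sub_self, hflat] at this
      exact this
    have hmb : m ≤ (flim d c (X d) + 2) ^ c := Nat.pow_le_pow_left (by omega) c
    -- equality of the bottom values
    have hle1 : derIter d X 0 ≤ derIter d X 1 :=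
      le_of_dig_le (by omega) c _ _ (lt_of_lt_of_le hA0 hmb) (lt_of_lt_of_le hA1 hmb) hdigA
    have hle2 : m - 1 - derIter d X 0 ≤ m - 1 - derIter d X 1 :=
      le_of_dig_le (by omega) c _ _
        (lt_of_le_of_lt (show m - 1 - derIter d X 0 ≤ m - 1 by omega)
          (lt_of_lt_of_le (by omega) hmb))
        (lt_of_le_of_lt (show m - 1 - derIter d X 1 ≤ m - 1 by omega)
          (lt_of_lt_of_le (by omega) hmb)) hdigB
    have hAeq : derIter d X 0 = derIter d X 1 := by omega
    exact claim_contradiction d hd X hXmono hAeq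
      (fun t h1 h2 => tauiff t h1 h2) (fun t h1 h2 => sigiff t h1 h2)
  · -- all blocks strict : produce the witness for C
    have hallne : ∀ i : ℕ, i ≤ d → flim d c (X i) ≠ flim d c (X (i+1)) := by
      intro i
      induction i with
      | zero => intro _; exact he0
      | succ n ih =>
        intro hn hcon
        exact ih (by omega) ((epsiff n (by omega)).2 hcon)
    have hstrict : ∀ i : ℕ, i ≤ d → flim d c (X i) < flim d c (X (i+1)) := by
      intro i hi
      have hle := flim_mono d c hc (le_of_lt (hXmono i hi))
      exact lt_of_le_of_ne hle (hallne i hi)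
    refine ⟨fun i => flim d c (x i), ?_, ?_, ?_⟩
    · -- strict monotone
      rw [Fin.strictMono_iff_lt_succ]
      intro i
      have h1 : x i.castSucc = X i := by
        rw [hXval i (by omega)]
        exact congrArg x (Fin.ext (by simp))
      have h2 : x i.succ = X ((i : ℕ)+1) := by
        rw [hXval ((i : ℕ)+1) (by omega)]
        exact congrArg x (Fin.ext (by simp))
      rw [h1, h2]
      exact hstrict i (by omega)
    · -- last bound
      calc flim d c (x (Fin.last (d+1))) ≤ x (Fin.last (d+1)) := flim_le_self d c hc _
      _ ≤ R := hxlast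
    · -- C-goodness
      intro j
      have m1 : (fun z : Fin (d+1) → ℕ => C (fun i => flim d c (z i)) j) ∈ compsList d c r C := by
        simp only [compsList, List.mem_append, List.mem_ofFn]
        exact Or.inl (Or.inl (Or.inl (Or.inl (Or.inl (Or.inl (Or.inl (Or.inl ⟨j, rfl⟩)))))))
      have c1 := hcomp _ m1
      exact c1


/-- no infinite strictly descending sequence of naturals -/
lemma no_inf_descent (v : ℕ → ℕ) (h : ∀ t, v (t+1) < v t) : False := by
  have key : ∀ n, v n + n ≤ v 0 := by
    intro n
    induction n with
    | zero => omega
    | succ m ih => have := h m; omega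
  have := key (v 0 + 1)
  omega

/-- infinite Ramsey theorem, relative version over infinite subsets of ℕ -/
theorem infinite_ramsey {κ : Type} [Fintype κ] :
    ∀ (k : ℕ) (g : (Fin k → ℕ) → κ) (S : Set ℕ), S.Infinite →
    ∃ T : Set ℕ, T ⊆ S ∧ T.Infinite ∧ ∃ c0 : κ,
      ∀ t : Fin k → ℕ, StrictMono t → (∀ i, t i ∈ T) → g t = c0 := by
  intro k
  induction k with
  | zero =>
    intro g S hS
    refine ⟨S, le_refl _, hS, g (fun i => i.elim0), ?_⟩
    intro t _ _
    congr 1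
    exact funext (fun i => i.elim0)
  | succ k ih =>
    intro g S hS
    -- one step of the construction
    have key : ∀ p : {T : Set ℕ // T.Infinite}, ∃ q : {T : Set ℕ // T.Infinite},
        ∃ (a : ℕ) (c0 : κ), a ∈ p.1 ∧ q.1 ⊆ p.1 ∧ (∀ y ∈ q.1, a < y) ∧
          (∀ t : Fin k → ℕ, StrictMono t → (∀ i, t i ∈ q.1) → g (Fin.cons a t) = c0) := by
      rintro ⟨T, hT⟩
      obtain ⟨a, haT⟩ := hT.nonempty
      have hT' : (T ∩ Set.Ioi a).Infinite := by
        have h : T \ Set.Iic a = T ∩ Set.Ioi a := by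
          rw [Set.diff_eq, Set.compl_Iic]
        rw [← h]
        exact Set.Infinite.diff hT (Set.finite_Iic a)
      obtain ⟨T', hT'sub, hT'inf, c0, hhom⟩ := ih (fun t => g (Fin.cons a t)) _ hT'
      refine ⟨⟨T', hT'inf⟩, a, c0, haT, ?_, ?_, ?_⟩
      · exact fun y hy => (hT'sub hy).1
      · exact fun y hy => (hT'sub hy).2
      · exact fun t ht hmem => hhom t ht hmem
    choose step aval cval hmem hsub hgt hhom using key
    -- iterate
    set F : ℕ → {T : Set ℕ // T.Infinite} := fun n => Nat.rec ⟨S, hS⟩ (fun _ p => step p) n with hF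
    have hFsucc : ∀ n, F (n+1) = step (F n) := fun n => rfl
    set aseq : ℕ → ℕ := fun n => aval (F n) with ha
    set cseq : ℕ → κ := fun n => cval (F n) with hcs
    -- chain of inclusions
    have hchain : ∀ n m, n ≤ m → (F m).1 ⊆ (F n).1 := by
      intro n m hnm
      induction m with
      | zero => have : n = 0 := by omega
                rw [this]
      | succ p ihp =>
        rcases Nat.lt_or_ge n (p+1) with h | h
        · intro y hy
          rw [hFsucc] at hy
          exact ihp (by omega) (hsub (F p) hy)
        · have : n = p + 1 := by omega
          rw [this]
      -- done
    have hmemF : ∀ n m, n ≤ m → aseq m ∈ (F n).1 := by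
      intro n m hnm
      exact hchain n m hnm (hmem (F m))
    have haseq_lt : ∀ n m, n < m → aseq n < aseq m := by
      intro n m hnm
      have h1 : aseq m ∈ (F (n+1)).1 := hmemF (n+1) m hnm
      rw [hFsucc] at h1
      exact hgt (F n) _ h1
    -- pigeonhole on colours
    have hfib : ∃ c0 : κ, (cseq ⁻¹' {c0}).Infinite := by
      by_contra hcon
      push_neg at hcon
      have : (Set.univ : Set ℕ).Finite := by
        have hcover : (Set.univ : Set ℕ) = ⋃ c0 ∈ (Finset.univ : Finset κ), cseq ⁻¹' {c0} := by
          ext n; simp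
        rw [hcover]
        exact Set.Finite.biUnion (Finset.finite_toSet _) (fun c0 _ => hcon c0)
      exact Set.infinite_univ this
    obtain ⟨c0, hc0⟩ := hfib
    refine ⟨aseq '' (cseq ⁻¹' {c0}), ?_, ?_, c0, ?_⟩
    · rintro y ⟨n, _, rfl⟩
      exact hmemF 0 n (by omega)
    · exact Set.Infinite.image
        (fun p _ q _ hpq => by
          by_contra hne
          rcases Nat.lt_or_ge p q with h | h
          · exact absurd hpq (Nat.ne_of_lt (haseq_lt p q h))
          · have : q < p := by omega
            exact absurd hpq.symm (Nat.ne_of_lt (haseq_lt q p this))) hc0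
    · -- homogeneity
      intro t ht htmem
      obtain ⟨n0, hn0fib, hn0⟩ := htmem 0
      have htail : ∀ i : Fin k, ∃ m, m > n0 ∧ aseq m = t i.succ ∧ t i.succ ∈ (F (n0+1)).1 := by
        intro i
        obtain ⟨m, _, hm⟩ := htmem i.succ
        have hlt : t 0 < t i.succ := ht (Fin.succ_pos i)
        have hn0m : n0 < m := by
          by_contra hcon
          push_neg at hcon
          rcases Nat.lt_or_ge m n0 with h | h
          · have := haseq_lt m n0 h; omega
          · have : m = n0 := by omega
            rw [this, hn0] at hm; omega
        exact ⟨m, hn0m, hm, by rw [← hm]; exact hmemF (n0+1) m hn0m⟩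
      have hcons : t = Fin.cons (t 0) (Fin.tail t) := (Fin.cons_self_tail t).symm
      rw [hcons, ← hn0]
      have := hhom (F n0) (Fin.tail t)
        (fun i j hij => ht (by simpa [Fin.succ_lt_succ_iff] using hij))
        (fun i => by
          obtain ⟨m, hm1, hm2, hm3⟩ := htail i
          show t i.succ ∈ (step (F n0)).1
          rw [← hFsucc]
          exact hm3)
      rw [this]
      have : cseq n0 = c0 := hn0fib
      exact this

theorem infinite_adjacent_ramsey (d r' : ℕ) (C : (Fin (d+1) → ℕ) → Fin r' → ℕ) :
    ∃ x : Fin (d+2) → ℕ, StrictMono x ∧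
      ∀ j, C (fun i => x i.castSucc) j ≤ C (fun i => x i.succ) j := by
  classical
  set g : (Fin (d+2) → ℕ) → (Fin r' → Bool) :=
    fun t j => decide (C (fun i => t i.castSucc) j ≤ C (fun i => t i.succ) j) with hg
  obtain ⟨T, _, hTinf, c0, hhom⟩ := infinite_ramsey (d+2) g Set.univ Set.infinite_univ
  have hstep : ∀ a : ℕ, ∃ y, y ∈ T ∧ a < y := by
    intro a
    obtain ⟨y, hy1, hy2⟩ := hTinf.exists_gt a
    exact ⟨y, hy1, hy2⟩
  choose nxt hnxtT hnxtgt using hstep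
  set b : ℕ → ℕ := fun n => Nat.rec (nxt 0) (fun _ y => nxt y) n with hb
  have hbT : ∀ n, b n ∈ T := by
    intro n
    cases n with
    | zero => exact hnxtT 0
    | succ m => exact hnxtT (b m)
  have hbmono : ∀ n, b n < b (n+1) := fun n => hnxtgt (b n)
  have hbstrict : StrictMono b := strictMono_nat_of_lt_succ hbmono
  have hwin : ∀ t : ℕ, g (fun i : Fin (d+2) => b (t + i)) = c0 := by
    intro t
    have hsm : StrictMono (fun i : Fin (d+2) => b (t + i)) := by
      intro i1 i2 h12
      exact hbstrict (Nat.add_lt_add_left (Fin.lt_def.1 h12) t)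
    have hmm : ∀ i : Fin (d+2), (fun i : Fin (d+2) => b (t + i)) i ∈ T := fun i => hbT _
    exact hhom (fun i : Fin (d+2) => b (t + i)) hsm hmm
  by_cases hall : ∀ j, c0 j = true
  · refine ⟨fun i : Fin (d+2) => b (0 + i), ?_, ?_⟩
    · intro i1 i2 h12
      exact hbstrict (Nat.add_lt_add_left (Fin.lt_def.1 h12) 0)
    · intro j
      have h1 := congrFun (hwin 0) j
      rw [hall j, hg] at h1
      exact of_decide_eq_true h1
  · exfalso
    push_neg at hall
    obtain ⟨j, hj⟩ := hall
    have hjf : c0 j = false := by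
      cases hcase : c0 j
      · rfl
      · exact absurd hcase hj
    set v : ℕ → ℕ := fun t => C (fun i : Fin (d+1) => b (t + i)) j with hv
    apply no_inf_descent v
    intro t
    have h1 := congrFun (hwin t) j
    rw [hjf, hg] at h1
    have h2 := of_decide_eq_false h1
    push_neg at h2
    have e1 : (fun i : Fin (d+1) => (fun i : Fin (d+2) => b (t + i)) i.castSucc)
        = (fun i : Fin (d+1) => b (t + i)) := by
      funext i
      exact congrArg b (by simp)
    have e2 : (fun i : Fin (d+1) => (fun i : Fin (d+2) => b (t + i)) i.succ)
        = (fun i : Fin (d+1) => b ((t+1) + i)) := by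
      funext i
      exact congrArg b (by show t + ((i:ℕ) + 1) = (t+1) + (i:ℕ); omega)
    rw [e1, e2] at h2
    exact h2

lemma ultra_pick (U : Ultrafilter ℕ) : ∀ (B : ℕ) (φ : ℕ → ℕ), (∀ R, φ R ≤ B) →
    ∃ v, {R | φ R = v} ∈ U := by
  intro B
  induction B with
  | zero =>
    intro φ hφ
    refine ⟨0, ?_⟩
    have : {R | φ R = 0} = Set.univ := by
      ext R; simp only [Set.mem_setOf_eq, Set.mem_univ, iff_true]
      have := hφ R; omega
    rw [this]
    exact Filter.univ_mem
  | succ B ih =>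
    intro φ hφ
    by_cases h : {R | φ R = B + 1} ∈ U
    · exact ⟨B + 1, h⟩
    · have hcompl : {R | φ R = B + 1}ᶜ ∈ U := (Ultrafilter.compl_mem_iff_notMem).2 h
      obtain ⟨v, hv⟩ := ih (fun R => min (φ R) B) (fun R => min_le_right _ _)
      refine ⟨v, ?_⟩
      have hsub : ({R | min (φ R) B = v} ∩ {R | φ R = B + 1}ᶜ) ⊆ {R | φ R = v} := by
        intro R hR
        obtain ⟨h1, h2⟩ := hR
        simp only [Set.mem_setOf_eq] at h1 ⊢
        simp only [Set.mem_compl_iff, Set.mem_setOf_eq] at h2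
        have := hφ R
        omega
      exact Filter.mem_of_superset (Filter.inter_mem hv hcompl) hsub

theorem exists_ARProp (f : ℕ → ℕ) (k r' : ℕ) : ∃ R, ARProp f (k+1) r' R := by
  classical
  by_contra hcon
  push_neg at hcon
  have hbad : ∀ R, ∃ C : (Fin (k+1) → ℕ) → (Fin r' → ℕ),
      (∀ x : Fin (k+1) → ℕ, (∀ i, x i ≤ R) → ∀ j, C x j ≤ f (Finset.univ.sup x) + 1) ∧
      ∀ x : Fin (k+2) → ℕ, StrictMono x → x (Fin.last (k+1)) ≤ R →
        ∃ j, C (fun i => x i.succ) j < C (fun i => x i.castSucc) j := by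
    intro R
    have h1 := hcon R
    unfold ARProp at h1
    push_neg at h1
    obtain ⟨C, hC1, hC2⟩ := h1
    exact ⟨C, hC1, hC2⟩
  choose CR hlim hbadx using hbad
  -- masked colourings
  set C' : ℕ → (Fin (k+1) → ℕ) → Fin r' → ℕ :=
    fun R z j => if (∀ i, z i ≤ R) then CR R z j else 0 with hC'
  have hmaskbound : ∀ R z j, C' R z j ≤ f (Finset.univ.sup z) + 1 := by
    intro R z j
    simp only [hC']
    split
    · next hcond => exact hlim R z hcond j
    · omega
  set U : Ultrafilter ℕ := @Filter.hyperfilter ℕ _ with hU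
  -- the limit colouring
  have hpick : ∀ (z : Fin (k+1) → ℕ) (j : Fin r'),
      ∃ v, {R | C' R z j = v} ∈ U :=
    fun z j => ultra_pick U (f (Finset.univ.sup z) + 1) (fun R => C' R z j)
      (fun R => hmaskbound R z j)
  choose Cinf hCinf using hpick
  -- apply the infinite adjacent Ramsey theorem
  obtain ⟨x, hxmono, hxgood⟩ := infinite_adjacent_ramsey k r' Cinf
  set M := x (Fin.last (k+1)) with hM
  -- a suitable R
  have hAmem : (⋂ j : Fin r', ({R | C' R (fun i => x i.castSucc) j = Cinf (fun i => x i.castSucc) j}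
      ∩ {R | C' R (fun i => x i.succ) j = Cinf (fun i => x i.succ) j})) ∈ U := by
    exact Filter.iInter_mem.mpr (fun j => Filter.inter_mem (hCinf _ j) (hCinf _ j))
  have hBmem : {R | M ≤ R} ∈ U := by
    have : {R | M ≤ R}ᶜ.Finite := by
      have : {R | M ≤ R}ᶜ ⊆ Set.Iio M := by
        intro R hR
        simp only [Set.mem_compl_iff, Set.mem_setOf_eq, not_le] at hR
        exact hR
      exact Set.Finite.subset (Set.finite_Iio M) this
    exact Filter.hyperfilter_le_cofinite (by rwa [Filter.mem_cofinite])
  obtain ⟨R, hR⟩ := Ultrafilter.nonempty_of_mem (Filter.inter_mem hAmem hBmem)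
  obtain ⟨hRA, hRB⟩ := hR
  have hRM : M ≤ R := hRB
  have hcond1 : ∀ i : Fin (k+1), x i.castSucc ≤ R :=
    fun i => le_trans (hxmono.monotone (Fin.le_last _)) hRM
  have hcond2 : ∀ i : Fin (k+1), x i.succ ≤ R :=
    fun i => le_trans (hxmono.monotone (Fin.le_last _)) hRM
  obtain ⟨j, hj⟩ := hbadx R x hxmono hRM
  have hRAj := Set.mem_iInter.1 hRA j
  obtain ⟨he1, he2⟩ := hRAj
  simp only [Set.mem_setOf_eq] at he1 he2
  have hu1 : C' R (fun i => x i.castSucc) j = CR R (fun i => x i.castSucc) j := by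
    simp only [hC']
    rw [if_pos hcond1]
  have hu2 : C' R (fun i => x i.succ) j = CR R (fun i => x i.succ) j := by
    simp only [hC']
    rw [if_pos hcond2]
  have hgood := hxgood j
  rw [← he1, ← he2, hu1, hu2] at hgood
  omega

/-- Lower bound for the parametrised adjacent Ramsey function:
`AR^{d+1}_{c√(log^d)}(r + 65·(d+1) + 2·c + 3) ≥ AR^{d+1}_id(r)`. -/
theorem AR_parametrised_lower_bound (d c r : ℕ) (hd : 1 ≤ d) (hc : 1 ≤ c) (hr : 1 ≤ r) :
    ARnum id (d+1) r ≤
      ARnum (fun i => sSup {j | tower d (j^c) ≤ i}) (d+1) (r + 65*(d+1) + 2*c + 3) := by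
  have hne : ∃ R, ARProp (flim d c) (d+1) (r + 65*(d+1) + 2*c + 3) R :=
    exists_ARProp (flim d c) d (r + 65*(d+1) + 2*c + 3)
  have hmem : sInf {R | ARProp (flim d c) (d+1) (r + 65*(d+1) + 2*c + 3) R}
      ∈ {R | ARProp (flim d c) (d+1) (r + 65*(d+1) + 2*c + 3) R} := Nat.sInf_mem hne
  have hkey := key_transfer d c r _ hd hc hmem
  have hfeq : (fun i => sSup {j | tower d (j^c) ≤ i}) = flim d c := rfl
  unfold ARnum
  rw [hfeq]
  exact Nat.sInf_le hkey
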